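/- arXiv:1510.02029 — 3 statements merged into one kernel-verified Lean document; each statement's English description precedes it below -/
import Mathlib

section
/- Let n ≥ 1, d ≥ 2, s ≥ 2, and let U = ℂ^{n+1}. (i) If (2n+1)s ≤ C(n+d,d) and there exist ℓ_1, m_1, …, ℓ_s, m_s ∈ U with dim_ℂ Σ_{i=1}^s (ℓ_i^{d−1}·U + ℓ_i^{d−2}·m_i·U) = (2n+1)s, then there exist ℓ_1', m_1', …, ℓ_{s−1}', m_{s−1}' ∈ U with dim_ℂ Σ_{i=1}^{s−1} (ℓ_i'^{d−1}·U + ℓ_i'^{d−2}·m_i'·U) = (2n+1)(s−1). (ii) If (2n+1)s ≥ C(n+d,d) and there exist ℓ_1, m_1, …, ℓ_s, m_s ∈ U with Σ_{i=1}^s (ℓ_i^{d−1}·U + ℓ_i^{d−2}·m_i·U) equal to the full space of degree-d forms, then there exist s+1 such pairs whose associated sum is again the full space of degree-d forms. (These assert that truth of a subabundant statement T(n,d;s) implies truth of T(n,d;s−1), and truth of a superabundant statement T(n,d;s) implies truth of T(n,d;s+1).) -/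
open MvPolynomial

/-- The linear form associated with a coefficient vector `v ∈ ℂ^{n+1}`. -/
noncomputable def lin {n : ℕ} (v : Fin (n + 1) → ℂ) : MvPolynomial (Fin (n + 1)) ℂ :=
  ∑ j, MvPolynomial.C (v j) * MvPolynomial.X j

/-- The subspace `f·U = {f·u : u ∈ U}` of the polynomial ring, where `U` is the
space of linear forms. -/
noncomputable def mulU {n : ℕ} (f : MvPolynomial (Fin (n + 1)) ℂ) :
    Submodule ℂ (MvPolynomial (Fin (n + 1)) ℂ) :=
  Submodule.span ℂ (Set.range fun j : Fin (n + 1) => f * MvPolynomial.X j)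

/-- The affine cone `ℓ^{d-1}·U + ℓ^{d-2}·m·U` over the tangent space to the tangential
variety `T_{n,d}` of the `d`-th Veronese variety at the point `[ℓ^{d-1} m]`. -/
noncomputable def tanCone {n : ℕ} (d : ℕ) (ℓ m : Fin (n + 1) → ℂ) :
    Submodule ℂ (MvPolynomial (Fin (n + 1)) ℂ) :=
  mulU (lin ℓ ^ (d - 1)) ⊔ mulU (lin ℓ ^ (d - 2) * lin m)

/-- `v ∈ U_{i+1}`, i.e. the coordinates of `v` indexed by `{24i, …, 24i+23}` vanish. -/
def memU {n : ℕ} (i : Fin 3) (v : Fin (n + 1) → ℂ) : Prop :=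
  ∀ j : Fin (n + 1), 24 * (i : ℕ) ≤ (j : ℕ) → (j : ℕ) < 24 * (i : ℕ) + 24 → v j = 0

/-- `S_3(U_{i+1})`: the span of all products of three linear forms belonging to `U_{i+1}`. -/
noncomputable def S3U {n : ℕ} (i : Fin 3) : Submodule ℂ (MvPolynomial (Fin (n + 1)) ℂ) :=
  Submodule.span ℂ
    {p | ∃ a b c : Fin (n + 1) → ℂ,
      memU i a ∧ memU i b ∧ memU i c ∧ p = lin a * lin b * lin c}

/-- `v ∈ U_K`, the span of the variables `x_0, …, x_71`. -/
def memK {n : ℕ} (v : Fin (n + 1) → ℂ) : Prop :=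
  ∀ j : Fin (n + 1), 72 ≤ (j : ℕ) → v j = 0

/-- `S_3(U_K)`: the span of all products of three linear forms in `x_0, …, x_71`. -/
noncomputable def S3K (n : ℕ) : Submodule ℂ (MvPolynomial (Fin (n + 1)) ℂ) :=
  Submodule.span ℂ
    {p | ∃ a b c : Fin (n + 1) → ℂ,
      memK a ∧ memK b ∧ memK c ∧ p = lin a * lin b * lin c}

/-- The alternating sum `Σ_{j=1}^k (−1)^{j−1} C(k,j) · C(n−24j+3, 3)` (with the convention
`C(m,3) = 0` for `m < 3`, realized by truncated subtraction `n+3−24j`). -/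
def altsum (n k : ℕ) : ℤ :=
  ∑ j ∈ Finset.Icc 1 k, (-1 : ℤ) ^ (j - 1) * (k.choose j : ℤ) * ((n + 3 - 24 * j).choose 3 : ℤ)

/-- `k = #{i : a_i ≠ 0}`. -/
def kcount (a : Fin 3 → ℕ) : ℕ := (Finset.univ.filter fun i => a i ≠ 0).card

/-- The expected dimension `w(n, s; a_1, a_2, a_3)`, as an integer. -/
def expdimZ (n s : ℕ) (a : Fin 3 → ℕ) : ℤ :=
  min (altsum n (kcount a) + 48 * ((a 0 + a 1 + a 2 : ℕ) : ℤ) + (2 * n + 1) * s)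
    (((n + 3).choose 3 : ℤ))

/-- The subspace `W(n, s; a_1, a_2, a_3)` determined by the given points. -/
noncomputable def Wspace {n s : ℕ} {a : Fin 3 → ℕ}
    (ℓ m : Fin s → Fin (n + 1) → ℂ)
    (ℓ' m' : (i : Fin 3) → Fin (a i) → Fin (n + 1) → ℂ) :
    Submodule ℂ (MvPolynomial (Fin (n + 1)) ℂ) :=
  (⨆ i : {i : Fin 3 // a i ≠ 0},
      (S3U i.1 ⊔ ⨆ j : Fin (a i.1), tanCone 3 (ℓ' i.1 j) (m' i.1 j)))
    ⊔ ⨆ i : Fin s, tanCone 3 (ℓ i) (m i)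

/-- The statement `T(n, s; a_1, a_2, a_3)`: some choice of points realizes the expected
dimension `w(n, s; a_1, a_2, a_3)`. -/
def TStmt (n s : ℕ) (a : Fin 3 → ℕ) : Prop :=
  ∃ (ℓ m : Fin s → Fin (n + 1) → ℂ)
    (ℓ' m' : (i : Fin 3) → Fin (a i) → Fin (n + 1) → ℂ),
    (∀ (i : Fin 3) (j : Fin (a i)), memU i (ℓ' i j) ∧ memU i (m' i j)) ∧
    (Module.finrank ℂ (Wspace ℓ m ℓ' m') : ℤ) = expdimZ n s a

/-- `s_1(n) = 48k² + (11+4r)k + ⌊(4r²+22r+33)/48⌋` where `n = 24k + r`. -/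
def s1 (n : ℕ) : ℕ :=
  48 * (n / 24) ^ 2 + (11 + 4 * (n % 24)) * (n / 24) +
    (4 * (n % 24) ^ 2 + 22 * (n % 24) + 33) / 48

/-- `s_2(n) = s_1(n) + 1`. -/
def s2 (n : ℕ) : ℕ := s1 n + 1

/-- `t(n) = 4n − 37`. -/
def tfun (n : ℕ) : ℕ := 4 * n - 37

/-- The expected codimension `c(n)` of `W(n, t(n); s_1(n−24), 0, 0)`. -/
def cInt (n : ℕ) : ℤ :=
  ((n + 3).choose 3 : ℤ) - ((n - 21).choose 3 : ℤ) - (tfun n : ℤ) * (2 * n + 1) -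
    48 * (s1 (n - 24) : ℤ)

instance mulU_fd {n : ℕ} (f : MvPolynomial (Fin (n + 1)) ℂ) : FiniteDimensional ℂ (mulU f) :=
  FiniteDimensional.span_of_finite ℂ (Set.finite_range _)

instance tanCone_fd {n : ℕ} (d : ℕ) (ℓ m : Fin (n + 1) → ℂ) :
    FiniteDimensional ℂ (tanCone d ℓ m) := by
  unfold tanCone; infer_instance

lemma finrank_mulU_le {n : ℕ} (f : MvPolynomial (Fin (n + 1)) ℂ) :
    Module.finrank ℂ (mulU f) ≤ n + 1 := by
  have h := finrank_range_le_card (R := ℂ) (fun j : Fin (n + 1) => f * MvPolynomial.X j)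
  simp only [Set.finrank, Fintype.card_fin] at h
  exact h

lemma mul_lin_mem {n : ℕ} (f : MvPolynomial (Fin (n + 1)) ℂ) (v : Fin (n + 1) → ℂ) :
    f * lin v ∈ mulU f := by
  rw [lin, Finset.mul_sum]
  refine Submodule.sum_mem _ fun j _ => ?_
  have h : f * (MvPolynomial.C (v j) * MvPolynomial.X j) = (v j) • (f * MvPolynomial.X j) := by
    rw [MvPolynomial.smul_eq_C_mul]; ring
  rw [h]
  exact Submodule.smul_mem _ _ (Submodule.subset_span ⟨j, rfl⟩)

lemma finrank_tanCone_le {n : ℕ} (d : ℕ) (hd : 2 ≤ d) (ℓ m : Fin (n + 1) → ℂ) :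
    Module.finrank ℂ (tanCone d ℓ m) ≤ 2 * n + 1 := by
  by_cases hℓ : lin ℓ = 0
  · have hf : lin ℓ ^ (d - 1) = 0 := by
      rw [hℓ]; exact zero_pow (by omega)
    have hbot : mulU (lin ℓ ^ (d - 1)) = ⊥ := by
      simp [mulU, hf]
    rw [tanCone, hbot, bot_sup_eq]
    exact (finrank_mulU_le _).trans (by omega)
  by_cases hm : lin m = 0
  · have hg : lin ℓ ^ (d - 2) * lin m = 0 := by rw [hm, mul_zero]
    have hbot : mulU (lin ℓ ^ (d - 2) * lin m) = ⊥ := by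
      simp [mulU, hg]
    rw [tanCone, hbot, sup_bot_eq]
    exact (finrank_mulU_le _).trans (by omega)
  · rw [tanCone]
    set f := lin ℓ ^ (d - 1) with hfdef
    set g := lin ℓ ^ (d - 2) * lin m with hgdef
    have hf : f ≠ 0 := pow_ne_zero _ hℓ
    have hfm : f * lin m ≠ 0 := mul_ne_zero hf hm
    have hmemA : f * lin m ∈ mulU f := mul_lin_mem _ _
    have hmemB : f * lin m ∈ mulU g := by
      have hfg : f * lin m = g * lin ℓ := by
        rw [hfdef, hgdef]
        have : lin ℓ ^ (d - 1) = lin ℓ ^ (d - 2) * lin ℓ := by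
          rw [← pow_succ]
          congr 1
          omega
        rw [this]; ring
      rw [hfg]; exact mul_lin_mem _ _
    have hnt : Nontrivial ↥(mulU f ⊓ mulU g) :=
      ⟨⟨⟨f * lin m, hmemA, hmemB⟩, 0, by simp [Subtype.ext_iff, hfm]⟩⟩
    have hpos : 0 < Module.finrank ℂ ↥(mulU f ⊓ mulU g) := Module.finrank_pos
    have key := Submodule.finrank_sup_add_finrank_inf_eq (mulU f) (mulU g)
    have h1 := finrank_mulU_le f
    have h2 := finrank_mulU_le g
    omega

lemma finrank_finset_sup_le {ι : Type*} {V : Type*} [AddCommGroup V] [Module ℂ V]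
    (t : Finset ι) (p : ι → Submodule ℂ V) [∀ i, FiniteDimensional ℂ (p i)] :
    Module.finrank ℂ ↥(t.sup p) ≤ ∑ i ∈ t, Module.finrank ℂ (p i) := by
  classical
  induction t using Finset.cons_induction with
  | empty => simp
  | cons a t ha ih =>
    rw [Finset.sup_cons, Finset.sum_cons]
    exact (Submodule.finrank_add_le_finrank_add_finrank _ _).trans (by omega)

lemma finrank_iSup_fin_le {V : Type*} [AddCommGroup V] [Module ℂ V]
    {k c : ℕ} (p : Fin k → Submodule ℂ V) [∀ i, FiniteDimensional ℂ (p i)]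
    (h : ∀ i, Module.finrank ℂ (p i) ≤ c) :
    Module.finrank ℂ ↥(⨆ i, p i) ≤ k * c := by
  rw [← Finset.sup_univ_eq_iSup]
  refine (finrank_finset_sup_le _ p).trans ?_
  calc ∑ i, Module.finrank ℂ (p i) ≤ ∑ _i : Fin k, c := Finset.sum_le_sum fun i _ => h i
    _ = k * c := by simp [Finset.sum_const, mul_comm]

/-- Lemma 3.2: a true subabundant statement `T(n,d;s)` implies `T(n,d;s−1)` true
(and subabundant), and a true superabundant statement `T(n,d;s)` implies
`T(n,d;s+1)` true (and superabundant). -/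
theorem sub_super_abundant_monotone (n d s : ℕ) (hn : 1 ≤ n) (hd : 2 ≤ d) (hs : 2 ≤ s) :
    (((2 * n + 1) * s ≤ (n + d).choose d →
      (∃ ℓ m : Fin s → Fin (n + 1) → ℂ,
        Module.finrank ℂ ↥(⨆ i, tanCone d (ℓ i) (m i)) = (2 * n + 1) * s) →
      ∃ ℓ m : Fin (s - 1) → Fin (n + 1) → ℂ,
        Module.finrank ℂ ↥(⨆ i, tanCone d (ℓ i) (m i)) = (2 * n + 1) * (s - 1))) ∧
    (((n + d).choose d ≤ (2 * n + 1) * s →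
      (∃ ℓ m : Fin s → Fin (n + 1) → ℂ,
        (⨆ i, tanCone d (ℓ i) (m i)) = MvPolynomial.homogeneousSubmodule (Fin (n + 1)) ℂ d) →
      ∃ ℓ m : Fin (s + 1) → Fin (n + 1) → ℂ,
        (⨆ i, tanCone d (ℓ i) (m i)) =
          MvPolynomial.homogeneousSubmodule (Fin (n + 1)) ℂ d)) := by
  constructor
  · rintro _hsub ⟨ℓ, m, hdim⟩
    refine ⟨fun i => ℓ (Fin.castLE (Nat.sub_le s 1) i),
      fun i => m (Fin.castLE (Nat.sub_le s 1) i), ?_⟩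
    set C : Fin s → Submodule ℂ (MvPolynomial (Fin (n + 1)) ℂ) :=
      fun i => tanCone d (ℓ i) (m i) with hC
    set V : Submodule ℂ (MvPolynomial (Fin (n + 1)) ℂ) :=
      ⨆ i : Fin (s - 1), C (Fin.castLE (Nat.sub_le s 1) i) with hV
    have hlast : s - 1 < s := by omega
    set last : Fin s := ⟨s - 1, hlast⟩ with hlastdef
    have hle : ∀ i : Fin s, Module.finrank ℂ (C i) ≤ 2 * n + 1 :=
      fun i => finrank_tanCone_le d hd _ _
    -- upper bound
    have hupper : Module.finrank ℂ V ≤ (2 * n + 1) * (s - 1) :=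
      (finrank_iSup_fin_le _ fun i => hle _).trans_eq (Nat.mul_comm _ _)
    -- W ≤ V ⊔ C last
    have hsub : (⨆ i : Fin s, C i) ≤ V ⊔ C last := by
      refine iSup_le fun i => ?_
      by_cases h : (i : ℕ) < s - 1
      · have heq : Fin.castLE (Nat.sub_le s 1) (⟨(i : ℕ), h⟩ : Fin (s - 1)) = i := by
          apply Fin.ext; rfl
        calc C i = C (Fin.castLE (Nat.sub_le s 1) ⟨(i : ℕ), h⟩) := by rw [heq]
          _ ≤ V := le_iSup (fun j : Fin (s - 1) => C (Fin.castLE (Nat.sub_le s 1) j)) _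
          _ ≤ V ⊔ C last := le_sup_left
      · have : i = last := by apply Fin.ext; simp only [hlastdef]; omega
        rw [this]; exact le_sup_right
    have hWle : Module.finrank ℂ ↥(⨆ i : Fin s, C i) ≤
        Module.finrank ℂ V + Module.finrank ℂ (C last) :=
      (Submodule.finrank_mono hsub).trans
        (Submodule.finrank_add_le_finrank_add_finrank _ _)
    rw [hdim] at hWle
    have harith : (2 * n + 1) * s = (2 * n + 1) * (s - 1) + (2 * n + 1) := by
      conv_lhs => rw [show s = (s - 1) + 1 by omega]
      ring
    have := hle last
    have : Module.finrank ℂ V = (2 * n + 1) * (s - 1) := by omega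
    simpa [hV, hC] using this
  · rintro _hsuper ⟨ℓ, m, heq⟩
    have hg : ∀ i : Fin (s + 1), min (i : ℕ) (s - 1) < s := fun i => by omega
    set g : Fin (s + 1) → Fin s := fun i => ⟨min (i : ℕ) (s - 1), hg i⟩ with hgdef
    refine ⟨fun i => ℓ (g i), fun i => m (g i), ?_⟩
    have hEq : (⨆ i : Fin (s + 1), tanCone d (ℓ (g i)) (m (g i))) =
        ⨆ i : Fin s, tanCone d (ℓ i) (m i) := by
      apply le_antisymm
      · exact iSup_le fun i => le_iSup (fun j : Fin s => tanCone d (ℓ j) (m j)) (g i)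
      · refine iSup_le fun i => ?_
        have hgi : g ⟨(i : ℕ), by omega⟩ = i := by
          apply Fin.ext; simp only [hgdef]; omega
        calc tanCone d (ℓ i) (m i)
            = tanCone d (ℓ (g ⟨(i : ℕ), by omega⟩)) (m (g ⟨(i : ℕ), by omega⟩)) := by rw [hgi]
          _ ≤ ⨆ j : Fin (s + 1), tanCone d (ℓ (g j)) (m (g j)) :=
              le_iSup (fun j : Fin (s + 1) => tanCone d (ℓ (g j)) (m (g j))) _
    rw [hEq]; exact heq
end

section
/- Let n ≥ 71. If the statement T(71, 0; 96, 96, 96) is true (in the 72-variable polynomial ring, i.e., with U = ℂ^{72}), then the statement T(n, 0; 96, 96, 96) is true (with U = ℂ^{n+1}). -/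
open MvPolynomial

/-! ### Auxiliary lemmas -/

section Aux

open Finsupp in
/-- Degree-3 combinatorics helpers -/
lemma choose2_mul (m : ℕ) : ((m + 2).choose 2 : ℤ) * 2 = (m + 1) * (m + 2) := by
  induction m with
  | zero => decide
  | succ k ih =>
    have : (k + 3).choose 2 = (k + 2).choose 2 + (k + 2).choose 1 := by
      rw [Nat.choose_succ_succ']; ring
    push_cast [this, Nat.choose_one_right]
    push_cast at ih
    linarith

lemma choose3_mul (m : ℕ) : ((m + 3).choose 3 : ℤ) * 6 = (m + 1) * (m + 2) * (m + 3) := by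
  induction m with
  | zero => decide
  | succ k ih =>
    have h : (k + 4).choose 3 = (k + 3).choose 3 + (k + 3).choose 2 := by
      rw [Nat.choose_succ_succ']; ring
    have h2 := choose2_mul (k + 1)
    push_cast at h2 ⊢
    push_cast [h]
    nlinarith [ih]

lemma kcount_eq : kcount ![96, 96, 96] = 3 := by decide

lemma altsum_eq (n : ℕ) (hn : 71 ≤ n) :
    altsum n 3 + 13824 = ((n + 3).choose 3 : ℤ) := by
  obtain ⟨t, rfl⟩ : ∃ t, n = 71 + t := ⟨n - 71, by omega⟩
  have e1 : 71 + t + 3 - 24 * 1 = t + 47 + 3 := by omega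
  have e2 : 71 + t + 3 - 24 * 2 = t + 23 + 3 := by omega
  have e3 : 71 + t + 3 - 24 * 3 = t + 2 := by omega
  have e0 : 71 + t + 3 = t + 71 + 3 := by omega
  have h1 := choose3_mul (t + 47)
  have h2 := choose3_mul (t + 23)
  have h0 := choose3_mul (t + 71)
  have h3 : ((t + 2).choose 3 : ℤ) * 6 = t * (t + 1) * (t + 2) := by
    rcases t with _ | t
    · decide
    · have := choose3_mul t
      push_cast at this ⊢
      linarith
  have hs : altsum (71 + t) 3 =
      3 * ((t + 47 + 3).choose 3 : ℤ) - 3 * ((t + 23 + 3).choose 3 : ℤ)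
        + ((t + 2).choose 3 : ℤ) := by
    rw [altsum, show Finset.Icc 1 3 = {1, 2, 3} from rfl]
    rw [Finset.sum_insert (by decide), Finset.sum_insert (by decide),
      Finset.sum_singleton, e1, e2, e3]
    push_cast
    rw [show Nat.choose 3 1 = 3 from rfl, show Nat.choose 3 2 = 3 from rfl,
      show Nat.choose 3 3 = 1 from rfl]
    ring
  rw [hs, e0]
  push_cast at h1 h2 h0 h3 ⊢
  nlinarith [h1, h2, h0, h3]

lemma expdim_eq (n : ℕ) (hn : 71 ≤ n) :
    expdimZ n 0 ![96, 96, 96] = ((n + 3).choose 3 : ℤ) := by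
  rw [expdimZ, kcount_eq]
  have := altsum_eq n hn
  simp only [Matrix.cons_val_zero, Matrix.cons_val_one, Matrix.head_cons,
    Matrix.cons_val_two, Matrix.tail_cons]
  push_cast
  omega

/-! ### Dimension of the degree-3 homogeneous component -/

noncomputable def degEquiv (k d : ℕ) :
    Sym (Fin k) d ≃ {P : Fin k →₀ ℕ // Finsupp.degree P = d} :=
  (Sym.equivNatSum (Fin k) d).trans (Equiv.subtypeEquivRight fun P => by
    simp [Finsupp.degree, Finsupp.sum]; rfl)

noncomputable instance (k d : ℕ) : Fintype {P : Fin k →₀ ℕ // Finsupp.degree P = d} :=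
  Fintype.ofEquiv _ (degEquiv k d)

lemma card_deg (k d : ℕ) :
    Fintype.card {P : Fin k →₀ ℕ // Finsupp.degree P = d} = (k + d - 1).choose d := by
  rw [← Fintype.card_congr (degEquiv k d), Sym.card_sym_eq_choose, Fintype.card_fin]

lemma homog_eq_rs (k d : ℕ) :
    homogeneousSubmodule (Fin k) ℂ d = restrictSupport ℂ {P | Finsupp.degree P = d} :=
  homogeneousSubmodule_eq_finsupp_supported _ _ d

noncomputable def homogBasis (k d : ℕ) :
    Module.Basis {P : Fin k →₀ ℕ // Finsupp.degree P = d} ℂ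
      (homogeneousSubmodule (Fin k) ℂ d) :=
  (homog_eq_rs k d).symm ▸ basisRestrictSupport ℂ {P | Finsupp.degree P = d}

lemma homog_fd (k d : ℕ) : FiniteDimensional ℂ (homogeneousSubmodule (Fin k) ℂ d) :=
  Module.Finite.of_basis (homogBasis k d)

lemma finrank_homog (k d : ℕ) :
    Module.finrank ℂ (homogeneousSubmodule (Fin k) ℂ d) = (k + d - 1).choose d := by
  rw [Module.finrank_eq_card_basis (homogBasis k d), card_deg]

/-! ### Homogeneity of the generators -/

lemma lin_hom {n : ℕ} (v : Fin (n + 1) → ℂ) : (lin v).IsHomogeneous 1 := by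
  rw [← mem_homogeneousSubmodule]
  refine Submodule.sum_mem _ fun j _ => ?_
  rw [← smul_eq_C_mul]
  exact Submodule.smul_mem _ _ (isHomogeneous_X ℂ j)

lemma mulU_le_homog {n : ℕ} {f : MvPolynomial (Fin (n + 1)) ℂ} (hf : f.IsHomogeneous 2) :
    mulU f ≤ homogeneousSubmodule (Fin (n + 1)) ℂ 3 := by
  rw [mulU, Submodule.span_le]
  rintro p ⟨j, rfl⟩
  exact hf.mul (isHomogeneous_X ℂ j)

lemma tanCone_le_homog {n : ℕ} (ℓ m : Fin (n + 1) → ℂ) :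
    tanCone 3 ℓ m ≤ homogeneousSubmodule (Fin (n + 1)) ℂ 3 := by
  refine sup_le (mulU_le_homog ?_) (mulU_le_homog ?_)
  · simpa using (lin_hom ℓ).pow 2
  · simpa using ((lin_hom ℓ).pow 1).mul (lin_hom m)

lemma S3U_le_homog {n : ℕ} (i : Fin 3) :
    S3U (n := n) i ≤ homogeneousSubmodule (Fin (n + 1)) ℂ 3 := by
  rw [S3U, Submodule.span_le]
  rintro p ⟨a, b, c, -, -, -, rfl⟩
  exact ((lin_hom a).mul (lin_hom b)).mul (lin_hom c)

lemma Wspace_le_homog {n s : ℕ} {a : Fin 3 → ℕ}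
    (ℓ m : Fin s → Fin (n + 1) → ℂ)
    (ℓ' m' : (i : Fin 3) → Fin (a i) → Fin (n + 1) → ℂ) :
    Wspace ℓ m ℓ' m' ≤ homogeneousSubmodule (Fin (n + 1)) ℂ 3 := by
  refine sup_le (iSup_le fun i => sup_le (S3U_le_homog i.1) (iSup_le fun j => ?_))
    (iSup_le fun i => tanCone_le_homog _ _)
  exact tanCone_le_homog _ _

/-! ### Padding vectors from 72 coordinates into `n + 1` coordinates -/

def emb (n : ℕ) (hn : 71 ≤ n) : Fin 72 → Fin (n + 1) := fun j => ⟨(j : ℕ), by omega⟩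

lemma emb_inj (n : ℕ) (hn : 71 ≤ n) : Function.Injective (emb n hn) := by
  intro x y h
  have hv : ((emb n hn x : Fin (n+1)) : ℕ) = ((emb n hn y : Fin (n+1)) : ℕ) := congrArg Fin.val h
  exact Fin.ext hv

noncomputable def pad (n : ℕ) (v : Fin 72 → ℂ) : Fin (n + 1) → ℂ :=
  fun j => if h : (j : ℕ) < 72 then v ⟨(j : ℕ), h⟩ else 0

lemma pad_emb (n : ℕ) (hn : 71 ≤ n) (v : Fin 72 → ℂ) (j : Fin 72) :
    pad n v (emb n hn j) = v j := by
  simp only [pad, emb]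
  exact dif_pos j.isLt

lemma rename_lin (n : ℕ) (hn : 71 ≤ n) (v : Fin 72 → ℂ) :
    rename (emb n hn) (lin v) = lin (pad n v) := by
  rw [lin, map_sum]
  simp only [map_mul, rename_C, rename_X]
  rw [lin]
  symm
  rw [← Finset.sum_subset (Finset.subset_univ (Finset.univ.image (emb n hn)))
    (fun x _ hx => ?_), Finset.sum_image (fun x _ y _ h => emb_inj n hn h)]
  · refine Finset.sum_congr rfl fun j _ => ?_
    rw [pad_emb]
  · have hx72 : ¬ ((x : ℕ) < 72) := by
      intro hlt
      exact hx (Finset.mem_image.2 ⟨⟨(x : ℕ), hlt⟩, Finset.mem_univ _, Fin.ext rfl⟩)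
    rw [pad, dif_neg hx72, map_zero, zero_mul]

lemma pad_memU {n : ℕ} (i : Fin 3) (v : Fin 72 → ℂ)
    (hv : memU (n := 71) i v) : memU (n := n) i (pad n v) := by
  intro j h1 h2
  rw [pad]
  split_ifs with h
  · exact hv ⟨(j : ℕ), h⟩ h1 h2
  · rfl

/-! ### Mapping the 72-variable space into the `n+1`-variable space -/

lemma map_mulU {n : ℕ} (hn : 71 ≤ n) (f : MvPolynomial (Fin 72) ℂ) :
    (mulU f).map (rename (emb n hn)).toLinearMap ≤ mulU (rename (emb n hn) f) := by
  rw [mulU, Submodule.map_span, Submodule.span_le]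
  rintro p ⟨q, ⟨j, rfl⟩, rfl⟩
  refine Submodule.subset_span ⟨emb n hn j, ?_⟩
  simp [mulU]

lemma map_tanCone {n : ℕ} (hn : 71 ≤ n) (ℓ m : Fin 72 → ℂ) :
    (tanCone 3 ℓ m).map (rename (emb n hn)).toLinearMap ≤
      tanCone 3 (pad n ℓ) (pad n m) := by
  rw [tanCone, Submodule.map_sup]
  refine sup_le ((map_mulU hn _).trans ?_) ((map_mulU hn _).trans ?_)
  · rw [map_pow, rename_lin]
    exact le_sup_left
  · rw [map_mul, map_pow, rename_lin, rename_lin]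
    exact le_sup_right

lemma map_S3U {n : ℕ} (hn : 71 ≤ n) (i : Fin 3) :
    (S3U (n := 71) i).map (rename (emb n hn)).toLinearMap ≤ S3U (n := n) i := by
  rw [S3U, Submodule.map_span, Submodule.span_le]
  rintro p ⟨q, ⟨a, b, c, ha, hb, hc, rfl⟩, rfl⟩
  refine Submodule.subset_span ⟨pad n a, pad n b, pad n c,
    pad_memU i a ha, pad_memU i b hb, pad_memU i c hc, ?_⟩
  show rename (emb n hn) (lin a * lin b * lin c) = _
  rw [map_mul, map_mul, rename_lin n hn, rename_lin n hn, rename_lin n hn]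

lemma map_Wspace {n : ℕ} (hn : 71 ≤ n) {a : Fin 3 → ℕ}
    (ℓ m : Fin 0 → Fin 72 → ℂ)
    (ℓ' m' : (i : Fin 3) → Fin (a i) → Fin 72 → ℂ) :
    (Wspace ℓ m ℓ' m').map (rename (emb n hn)).toLinearMap ≤
      Wspace (n := n) Fin.elim0 Fin.elim0
        (fun i j => pad n (ℓ' i j)) (fun i j => pad n (m' i j)) := by
  rw [Wspace, Wspace, Submodule.map_sup, Submodule.map_iSup]
  refine sup_le (le_sup_of_le_left (iSup_le fun i => ?_)) ?_
  · rw [Submodule.map_sup, Submodule.map_iSup]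
    refine le_trans ?_ (le_iSup _ i)
    exact sup_le (le_sup_of_le_left (map_S3U hn i.1))
      (le_sup_of_le_right (iSup_le fun j => le_trans (map_tanCone hn _ _) (le_iSup (fun j => tanCone 3 (pad n (ℓ' i.1 j)) (pad n (m' i.1 j))) j)))
  · rw [iSup_of_empty, Submodule.map_bot]
    exact bot_le

/-! ### Monomials -/

lemma lin_single {n : ℕ} (a : Fin (n + 1)) : lin (Pi.single a 1) = X a := by
  rw [lin, Finset.sum_eq_single a]
  · simp
  · intro b _ hb
    rw [Pi.single_eq_of_ne hb, map_zero, zero_mul]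
  · simp

lemma X_mul_mem_S3U {n : ℕ} (i : Fin 3) (a b c : Fin (n + 1))
    (ha : ¬ (24 * (i : ℕ) ≤ (a : ℕ) ∧ (a : ℕ) < 24 * (i : ℕ) + 24))
    (hb : ¬ (24 * (i : ℕ) ≤ (b : ℕ) ∧ (b : ℕ) < 24 * (i : ℕ) + 24))
    (hc : ¬ (24 * (i : ℕ) ≤ (c : ℕ) ∧ (c : ℕ) < 24 * (i : ℕ) + 24)) :
    (X a * X b * X c : MvPolynomial (Fin (n + 1)) ℂ) ∈ S3U i := by
  have single_memU : ∀ x : Fin (n + 1),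
      ¬ (24 * (i : ℕ) ≤ (x : ℕ) ∧ (x : ℕ) < 24 * (i : ℕ) + 24) →
      memU i (Pi.single x (1 : ℂ)) := by
    intro x hx j h1 h2
    have : j ≠ x := by
      intro h
      exact hx ⟨by omega, by omega⟩
    exact Pi.single_eq_of_ne this 1
  exact Submodule.subset_span ⟨Pi.single a 1, Pi.single b 1, Pi.single c 1,
    single_memU a ha, single_memU b hb, single_memU c hc, by
      rw [lin_single, lin_single, lin_single]⟩

lemma monomial_eq_XXX {n : ℕ} (d : Fin (n + 1) →₀ ℕ) (hd : Finsupp.degree d = 3) :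
    ∃ a b c : Fin (n + 1), monomial d (1 : ℂ) = X a * X b * X c := by
  have hcard : Multiset.card d.toMultiset = 3 := by
    rw [Finsupp.card_toMultiset]
    exact hd
  obtain ⟨a, b, c, habc⟩ := Multiset.card_eq_three.1 hcard
  refine ⟨a, b, c, ?_⟩
  have hdd : d = Multiset.toFinsupp ({a, b, c} : Multiset (Fin (n + 1))) := by
    rw [← habc, Finsupp.toMultiset_toFinsupp]
  have : d = Finsupp.single a 1 + Finsupp.single b 1 + Finsupp.single c 1 := by
    rw [hdd, show ({a, b, c} : Multiset (Fin (n + 1))) = {a} + ({b} + {c}) by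
      rw [Multiset.singleton_add, Multiset.singleton_add]; rfl]
    rw [map_add, map_add, Multiset.toFinsupp_singleton, Multiset.toFinsupp_singleton,
      Multiset.toFinsupp_singleton]
    abel
  rw [this, X, X, X, monomial_mul, monomial_mul]
  norm_num

end Aux

/-- Proposition 3.7 (iv): for `n ≥ 71`, truth of `T(71, 0; 96, 96, 96)` implies truth of
`T(n, 0; 96, 96, 96)`. -/


theorem induction_step_iv (n : ℕ) (hn : 71 ≤ n)
    (h71 : TStmt 71 0 ![96, 96, 96]) :
    TStmt n 0 ![96, 96, 96] := by
  classical
  -- unpack the 71-dimensional witness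
  obtain ⟨ℓ0, m0, ℓ', m', hmem, hrank⟩ := h71
  -- the 71-dimensional space is the full degree-3 component
  haveI := homog_fd 72 3
  have hW71le : Wspace ℓ0 m0 ℓ' m' ≤ homogeneousSubmodule (Fin 72) ℂ 3 :=
    Wspace_le_homog ℓ0 m0 ℓ' m'
  have hfr71 : Module.finrank ℂ (homogeneousSubmodule (Fin 72) ℂ 3) = (74).choose 3 := by
    rw [finrank_homog]
  have hrank' : Module.finrank ℂ (Wspace ℓ0 m0 ℓ' m') = (74).choose 3 := by
    rw [expdim_eq 71 le_rfl] at hrank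
    exact_mod_cast hrank
  have hW71 : Wspace ℓ0 m0 ℓ' m' = homogeneousSubmodule (Fin 72) ℂ 3 :=
    Submodule.eq_of_le_of_finrank_le hW71le (by rw [hfr71, hrank'])
  -- build the padded witness in dimension n
  refine ⟨Fin.elim0, Fin.elim0, fun i j => pad n (ℓ' i j), fun i j => pad n (m' i j),
    fun i j => ⟨pad_memU i _ (hmem i j).1, pad_memU i _ (hmem i j).2⟩, ?_⟩
  set Wn := Wspace (n := n) Fin.elim0 Fin.elim0
    (fun i j => pad n (ℓ' i j)) (fun i j => pad n (m' i j)) with hWn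
  have hmap : (Wspace ℓ0 m0 ℓ' m').map (rename (emb n hn)).toLinearMap ≤ Wn :=
    map_Wspace hn ℓ0 m0 ℓ' m'
  -- Wn equals the full degree-3 component
  have hle : Wn ≤ homogeneousSubmodule (Fin (n + 1)) ℂ 3 := Wspace_le_homog _ _ _ _
  have hge : homogeneousSubmodule (Fin (n + 1)) ℂ 3 ≤ Wn := by
    rw [homog_eq_rs, restrictSupport, AddMonoidAlgebra.supported_eq_span_single, Submodule.span_le]
    rintro p ⟨d, hd, rfl⟩
    have hd3 : Finsupp.degree d = 3 := hd
    obtain ⟨x, y, z, hxyz⟩ := monomial_eq_XXX d hd3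
    have hsm : (AddMonoidAlgebra.single d 1 : MvPolynomial (Fin (n + 1)) ℂ) = X x * X y * X z := by
      rw [single_eq_monomial, hxyz]
    show (AddMonoidAlgebra.single d 1 : MvPolynomial (Fin (n + 1)) ℂ) ∈ Wn
    rw [hsm]
    by_cases hcase : ∃ i : Fin 3,
        ¬ (24 * (i : ℕ) ≤ (x : ℕ) ∧ (x : ℕ) < 24 * (i : ℕ) + 24) ∧
        ¬ (24 * (i : ℕ) ≤ (y : ℕ) ∧ (y : ℕ) < 24 * (i : ℕ) + 24) ∧
        ¬ (24 * (i : ℕ) ≤ (z : ℕ) ∧ (z : ℕ) < 24 * (i : ℕ) + 24)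
    · obtain ⟨i, h1, h2, h3⟩ := hcase
      have hS3 : S3U (n := n) i ≤ Wn := by
        rw [hWn, Wspace]
        have hia : ![96, 96, 96] i ≠ 0 := by fin_cases i <;> norm_num
        exact le_sup_of_le_left (le_sup_left.trans
          (le_iSup (fun i' : {i : Fin 3 // ![96, 96, 96] i ≠ 0} =>
            S3U (n := n) i'.1 ⊔ ⨆ j, tanCone 3 (pad n (ℓ' i'.1 j)) (pad n (m' i'.1 j)))
            ⟨i, hia⟩))
      exact hS3 (X_mul_mem_S3U i x y z h1 h2 h3)
    · -- all three indices are below 72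
      have h0 := fun i => (not_exists.1 hcase) i
      have hx72 : (x : ℕ) < 72 ∧ (y : ℕ) < 72 ∧ (z : ℕ) < 72 := by
        have g0 := h0 0
        have g1 := h0 1
        have g2 := h0 2
        simp only [Fin.isValue, Fin.val_zero, Fin.val_one, Fin.val_two] at g0 g1 g2
        omega
      obtain ⟨hx, hy, hz⟩ := hx72
      have hXx : (X x : MvPolynomial (Fin (n + 1)) ℂ) = rename (emb n hn) (X ⟨(x : ℕ), hx⟩) := by
        rw [rename_X]; exact congrArg X (Fin.ext rfl)
      have hXy : (X y : MvPolynomial (Fin (n + 1)) ℂ) = rename (emb n hn) (X ⟨(y : ℕ), hy⟩) := by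
        rw [rename_X]; exact congrArg X (Fin.ext rfl)
      have hXz : (X z : MvPolynomial (Fin (n + 1)) ℂ) = rename (emb n hn) (X ⟨(z : ℕ), hz⟩) := by
        rw [rename_X]; exact congrArg X (Fin.ext rfl)
      have hq : (X ⟨(x : ℕ), hx⟩ * X ⟨(y : ℕ), hy⟩ * X ⟨(z : ℕ), hz⟩ :
          MvPolynomial (Fin 72) ℂ) ∈ Wspace ℓ0 m0 ℓ' m' := by
        rw [hW71]
        exact ((isHomogeneous_X ℂ _).mul (isHomogeneous_X ℂ _)).mul (isHomogeneous_X ℂ _)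
      have hmem' := hmap (Submodule.mem_map_of_mem
        (f := (rename (emb n hn)).toLinearMap) hq)
      rw [hXx, hXy, hXz, ← map_mul, ← map_mul]
      exact hmem'
  have hWeq : Wn = homogeneousSubmodule (Fin (n + 1)) ℂ 3 := le_antisymm hle hge
  rw [hWeq, expdim_eq n hn, finrank_homog]
  congr 2
end

section
/- Let n ≥ 71, let i ∈ {1,2,3}, and let ℓ, m ∈ U_i be linearly independent. Then dim_ℂ ( S_3(U_i) + ℓ²·U + ℓ·m·U ) = C(n−21, 3) + 48; i.e., the sum of S_3(U_i) with the affine cone over the tangent space to T_{n,3} at a point of T_{n,3} ∩ P(S_3(U_i)) with linearly independent ℓ, m has dimension N(n−24) + 48. -/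
open MvPolynomial

namespace Eq13
open MvPolynomial Finset

variable {n : ℕ}

lemma coeff_lin (v : Fin (n+1) → ℂ) (t : Fin (n+1)) :
    MvPolynomial.coeff (Finsupp.single t 1) (lin v) = v t := by
  rw [lin, MvPolynomial.coeff_sum]
  rw [Finset.sum_eq_single t]
  · simp [MvPolynomial.coeff_C_mul, MvPolynomial.coeff_X]
  · intro b _ hb
    simp [MvPolynomial.coeff_C_mul, MvPolynomial.coeff_X', Finsupp.single_left_inj, hb]
  · simp

lemma lin_eq_zero {v : Fin (n+1) → ℂ} (h : lin v = 0) : v = 0 := by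
  funext t
  have := coeff_lin v t
  rw [h] at this
  simpa using this.symm

lemma lin_single (p : Fin (n+1)) : lin (Pi.single p (1:ℂ)) = MvPolynomial.X p := by
  rw [lin, Finset.sum_eq_single p]
  · simp
  · intro b _ hb; simp [Pi.single_eq_of_ne hb]
  · simp

lemma lin_comb (a b : ℂ) (v w : Fin (n+1) → ℂ) :
    MvPolynomial.C a * lin v + MvPolynomial.C b * lin w = lin (a • v + b • w) := by
  simp only [lin, Finset.mul_sum, ← Finset.sum_add_distrib, Pi.add_apply, Pi.smul_apply,
    smul_eq_mul, map_add, map_mul]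
  exact Finset.sum_congr rfl fun j _ => by ring




lemma XXX (p q r : Fin (n+1)) :
    (MvPolynomial.X p * MvPolynomial.X q * MvPolynomial.X r : MvPolynomial (Fin (n+1)) ℂ) =
      MvPolynomial.monomial (Finsupp.single p 1 + Finsupp.single q 1 + Finsupp.single r 1) 1 := by
  rw [MvPolynomial.X, MvPolynomial.X, MvPolynomial.X, MvPolynomial.monomial_mul,
    MvPolynomial.monomial_mul, mul_one, mul_one]

-- Lemma A: products of two "good" linear forms have coefficients supported on good monomials
lemma coeff_lin_mul_lin {v w : Fin (n+1) → ℂ} {j : Fin (n+1)} (hv : v j = 0) (hw : w j = 0)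
    {d : Fin (n+1) →₀ ℕ} (hd : d j ≠ 0) :
    MvPolynomial.coeff d (lin v * lin w) = 0 := by
  rw [lin, lin, Finset.sum_mul_sum]
  rw [MvPolynomial.coeff_sum]
  refine Finset.sum_eq_zero fun p _ => ?_
  rw [MvPolynomial.coeff_sum]
  refine Finset.sum_eq_zero fun q _ => ?_
  have : (MvPolynomial.C (v p) * MvPolynomial.X p) * (MvPolynomial.C (w q) * MvPolynomial.X q)
      = MvPolynomial.C (v p * w q) * (MvPolynomial.X p * MvPolynomial.X q) := by
    rw [map_mul]; ring
  rw [this, MvPolynomial.coeff_C_mul]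
  rcases eq_or_ne d (Finsupp.single p 1 + Finsupp.single q 1) with hdd | hdd
  · have hj : j = p ∨ j = q := by
      by_contra hc
      push_neg at hc
      apply hd
      rw [hdd]
      simp [Finsupp.single_apply, Ne.symm hc.1, Ne.symm hc.2]
    rcases hj with rfl | rfl
    · simp [hv]
    · simp [hw]
  · have : MvPolynomial.coeff d (MvPolynomial.X p * MvPolynomial.X q :
        MvPolynomial (Fin (n+1)) ℂ) = 0 := by
      rw [MvPolynomial.X, MvPolynomial.X, MvPolynomial.monomial_mul, mul_one,
        MvPolynomial.coeff_monomial, if_neg (fun hh => hdd hh.symm)]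
    rw [this, mul_zero]




/-- `j` is one of the 24 "excluded" indices for `U_{i+1}`. -/
def Bad (n : ℕ) (i : Fin 3) (j : Fin (n+1)) : Prop :=
  24 * (i:ℕ) ≤ (j:ℕ) ∧ (j:ℕ) < 24 * (i:ℕ) + 24

instance (i : Fin 3) : DecidablePred (Bad n i) := fun _ => instDecidableAnd

abbrev Gt (n : ℕ) (i : Fin 3) := {j : Fin (n+1) // ¬ Bad n i j}
abbrev Bt (n : ℕ) (i : Fin 3) := {j : Fin (n+1) // Bad n i j}

noncomputable def expOf {i : Fin 3} (s : Sym (Gt n i) 3) : Fin (n+1) →₀ ℕ :=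
  Multiset.toFinsupp (s.1.map Subtype.val)

lemma expOf_injective {i : Fin 3} : Function.Injective (expOf (n := n) (i := i)) := by
  intro s t h
  apply Subtype.ext
  exact Multiset.map_injective Subtype.val_injective (Multiset.toFinsupp.injective h)

lemma expOf_bad {i : Fin 3} (s : Sym (Gt n i) 3) {j : Fin (n+1)} (hj : Bad n i j) :
    expOf s j = 0 := by
  rw [expOf, Multiset.toFinsupp_apply, Multiset.count_eq_zero]
  intro hmem
  obtain ⟨a, _, rfl⟩ := Multiset.mem_map.mp hmem
  exact a.2 hj

noncomputable def mono {i : Fin 3} (s : Sym (Gt n i) 3) : MvPolynomial (Fin (n+1)) ℂ :=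
  MvPolynomial.monomial (expOf s) 1

def sym3 {i : Fin 3} (a b c : Gt n i) : Sym (Gt n i) 3 := ⟨{a, b, c}, rfl⟩

lemma expOf_sym3 {i : Fin 3} (a b c : Gt n i) :
    expOf (sym3 a b c) = Finsupp.single a.1 1 + Finsupp.single b.1 1 + Finsupp.single c.1 1 := by
  show Multiset.toFinsupp (Multiset.map Subtype.val {a, b, c}) = _
  have : Multiset.map (Subtype.val) ({a, b, c} : Multiset (Gt n i))
      = a.1 ::ₘ b.1 ::ₘ {c.1} := by
    simp [Multiset.insert_eq_cons]
  rw [this, ← Multiset.singleton_add, ← Multiset.singleton_add, Multiset.toFinsupp_add,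
    Multiset.toFinsupp_add, Multiset.toFinsupp_singleton, Multiset.toFinsupp_singleton,
    Multiset.toFinsupp_singleton, add_assoc]

lemma mono_sym3 {i : Fin 3} (a b c : Gt n i) :
    mono (sym3 a b c) = MvPolynomial.X a.1 * MvPolynomial.X b.1 * MvPolynomial.X c.1 := by
  rw [mono, expOf_sym3, ← XXX]

lemma memU_single {i : Fin 3} {p : Fin (n+1)} (hp : ¬ Bad n i p) :
    memU i (Pi.single p (1:ℂ)) := by
  intro j h1 h2
  have : j ≠ p := fun hh => hp (hh ▸ ⟨h1, h2⟩)
  exact Pi.single_eq_of_ne this 1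

lemma mono_mem_S3U {i : Fin 3} (s : Sym (Gt n i) 3) : mono s ∈ S3U (n := n) i := by
  obtain ⟨a, b, c, hs⟩ := Multiset.card_eq_three.mp s.2
  have hs3 : s = sym3 a b c := Subtype.ext hs
  rw [hs3, mono_sym3]
  apply Submodule.subset_span
  refine ⟨Pi.single a.1 1, Pi.single b.1 1, Pi.single c.1 1,
    memU_single a.2, memU_single b.2, memU_single c.2, ?_⟩
  rw [lin_single, lin_single, lin_single]




/-- The generating family: good-degree-3 monomials, plus `ℓ²xⱼ`, `ℓm xⱼ` for bad `j`. -/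
noncomputable def F (i : Fin 3) (ℓ m : Fin (n+1) → ℂ) :
    Sym (Gt n i) 3 ⊕ (Bt n i ⊕ Bt n i) → MvPolynomial (Fin (n+1)) ℂ
  | .inl s => mono s
  | .inr (.inl j) => lin ℓ * lin ℓ * MvPolynomial.X j.1
  | .inr (.inr j) => lin ℓ * lin m * MvPolynomial.X j.1

lemma triple_expand (a b c : Fin (n+1) → ℂ) :
    lin a * lin b * lin c = ∑ p, ∑ q, ∑ r,
      (a p * b q * c r) • (MvPolynomial.X p * MvPolynomial.X q * MvPolynomial.X r
        : MvPolynomial (Fin (n+1)) ℂ) := by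
  rw [lin, lin, lin, Finset.sum_mul_sum, Finset.sum_mul]
  refine Finset.sum_congr rfl fun p _ => ?_
  rw [Finset.sum_mul]
  refine Finset.sum_congr rfl fun q _ => ?_
  rw [Finset.mul_sum]
  refine Finset.sum_congr rfl fun r _ => ?_
  rw [MvPolynomial.smul_eq_C_mul, map_mul, map_mul]
  ring

lemma triple_mem_span {i : Fin 3} {ℓ' m' : Fin (n+1) → ℂ} {a b c : Fin (n+1) → ℂ}
    (ha : memU i a) (hb : memU i b) (hc : memU i c) :
    lin a * lin b * lin c ∈ Submodule.span ℂ (Set.range (F i ℓ' m')) := by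
  rw [triple_expand]
  refine Submodule.sum_mem _ fun p _ => Submodule.sum_mem _ fun q _ =>
    Submodule.sum_mem _ fun r _ => ?_
  by_cases hp : Bad n i p
  · rw [ha p hp.1 hp.2]; simp
  by_cases hq : Bad n i q
  · rw [hb q hq.1 hq.2]; simp
  by_cases hr : Bad n i r
  · rw [hc r hr.1 hr.2]; simp
  refine Submodule.smul_mem _ _ (Submodule.subset_span ?_)
  exact ⟨Sum.inl (sym3 ⟨p, hp⟩ ⟨q, hq⟩ ⟨r, hr⟩), (mono_sym3 _ _ _)⟩

lemma tanCone_three (ℓ m : Fin (n+1) → ℂ) :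
    tanCone 3 ℓ m = mulU (lin ℓ * lin ℓ) ⊔ mulU (lin ℓ * lin m) := by
  have h1 : (3:ℕ) - 1 = 2 := rfl
  have h2 : (3:ℕ) - 2 = 1 := rfl
  rw [tanCone, h1, h2, pow_one, pow_two]

lemma span_F_eq {i : Fin 3} {ℓ m : Fin (n+1) → ℂ} (hℓ : memU i ℓ) (hm : memU i m) :
    Submodule.span ℂ (Set.range (F i ℓ m)) = S3U (n := n) i ⊔ tanCone 3 ℓ m := by
  apply le_antisymm
  · rw [Submodule.span_le]
    rintro x ⟨idx, rfl⟩
    rcases idx with s | j | j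
    · exact Submodule.mem_sup_left (mono_mem_S3U s)
    · apply Submodule.mem_sup_right
      rw [tanCone_three]
      exact Submodule.mem_sup_left (Submodule.subset_span ⟨j.1, rfl⟩)
    · apply Submodule.mem_sup_right
      rw [tanCone_three]
      exact Submodule.mem_sup_right (Submodule.subset_span ⟨j.1, rfl⟩)
  · apply sup_le
    · rw [S3U, Submodule.span_le]
      rintro x ⟨a, b, c, ha, hb, hc, rfl⟩
      exact triple_mem_span ha hb hc
    · rw [tanCone_three]
      apply sup_le <;> rw [mulU, Submodule.span_le] <;> rintro x ⟨j, rfl⟩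
      · show lin ℓ * lin ℓ * MvPolynomial.X j ∈ _
        by_cases hj : Bad n i j
        · exact Submodule.subset_span ⟨Sum.inr (Sum.inl ⟨j, hj⟩), rfl⟩
        · rw [← lin_single (n := n) j]
          exact triple_mem_span hℓ hℓ (memU_single hj)
      · show lin ℓ * lin m * MvPolynomial.X j ∈ _
        by_cases hj : Bad n i j
        · exact Submodule.subset_span ⟨Sum.inr (Sum.inr ⟨j, hj⟩), rfl⟩
        · rw [← lin_single (n := n) j]
          exact triple_mem_span hℓ hm (memU_single hj)




lemma linearIndependent_F {i : Fin 3} {ℓ m : Fin (n+1) → ℂ}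
    (hℓ : memU i ℓ) (hm : memU i m) (h : LinearIndependent ℂ ![ℓ, m]) :
    LinearIndependent ℂ (F (n := n) i ℓ m) := by
  have hℓne : lin ℓ ≠ 0 := by
    intro hz
    have h0 : ℓ = 0 := lin_eq_zero hz
    exact h.ne_zero 0 (by simpa using h0)
  rw [Fintype.linearIndependent_iff]
  intro g hsum
  have key : ∀ j0 : Bt n i, g (Sum.inr (Sum.inl j0)) = 0 ∧ g (Sum.inr (Sum.inr j0)) = 0 := by
    intro j0
    have hq : MvPolynomial.C (g (Sum.inr (Sum.inl j0))) * (lin ℓ * lin ℓ)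
        + MvPolynomial.C (g (Sum.inr (Sum.inr j0))) * (lin ℓ * lin m) = 0 := by
      apply MvPolynomial.ext
      intro ν
      rw [MvPolynomial.coeff_add, MvPolynomial.coeff_C_mul, MvPolynomial.coeff_C_mul,
        MvPolynomial.coeff_zero]
      by_cases hν : ∀ j' : Fin (n+1), Bad n i j' → ν j' = 0
      · -- compare coefficients of `x^(e_{j0} + ν)` in `hsum`
        set d : Fin (n+1) →₀ ℕ := Finsupp.single j0.1 1 + ν with hd_def
        have hdj0 : d j0.1 = 1 := by
          rw [hd_def, Finsupp.add_apply, Finsupp.single_eq_same, hν j0.1 j0.2]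
        have hXj : ∀ (P : MvPolynomial (Fin (n+1)) ℂ) (j : Bt n i),
            MvPolynomial.coeff d (P * MvPolynomial.X j.1)
              = if j = j0 then MvPolynomial.coeff ν P else 0 := by
          intro P j
          rw [MvPolynomial.coeff_mul_X']
          by_cases hjj : j = j0
          · subst hjj
            rw [if_pos (Finsupp.mem_support_iff.mpr (by rw [hdj0]; exact one_ne_zero)),
              if_pos rfl, hd_def, add_tsub_cancel_left]
          · have hne : j.1 ≠ j0.1 := fun hv => hjj (Subtype.ext hv)
            have : d j.1 = 0 := by
              rw [hd_def, Finsupp.add_apply, Finsupp.single_eq_of_ne' (Ne.symm hne),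
                hν j.1 j.2, add_zero]
            rw [if_neg (by rw [Finsupp.mem_support_iff]; exact fun hh => hh this),
              if_neg hjj]
        have hd := congrArg (MvPolynomial.coeff d) hsum
        rw [MvPolynomial.coeff_zero, MvPolynomial.coeff_sum, Fintype.sum_sum_type,
          Fintype.sum_sum_type] at hd
        have hA : ∀ s : Sym (Gt n i) 3,
            MvPolynomial.coeff d (g (Sum.inl s) • F i ℓ m (Sum.inl s)) = 0 := by
          intro s
          rw [MvPolynomial.coeff_smul]
          have : MvPolynomial.coeff d (F i ℓ m (Sum.inl s)) = 0 := by
            show MvPolynomial.coeff d (mono s) = 0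
            rw [mono, MvPolynomial.coeff_monomial, if_neg]
            intro hh
            have h1 : expOf s j0.1 = 0 := expOf_bad s j0.2
            rw [hh] at h1
            rw [hdj0] at h1
            exact one_ne_zero h1
          rw [this, smul_zero]
        have hB : ∑ j : Bt n i,
            MvPolynomial.coeff d (g (Sum.inr (Sum.inl j)) • F i ℓ m (Sum.inr (Sum.inl j)))
            = g (Sum.inr (Sum.inl j0)) * MvPolynomial.coeff ν (lin ℓ * lin ℓ) := by
          rw [Finset.sum_eq_single j0]
          · rw [MvPolynomial.coeff_smul]
            show g _ • MvPolynomial.coeff d (lin ℓ * lin ℓ * MvPolynomial.X j0.1) = _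
            rw [hXj, if_pos rfl, smul_eq_mul]
          · intro j _ hjne
            rw [MvPolynomial.coeff_smul]
            show g _ • MvPolynomial.coeff d (lin ℓ * lin ℓ * MvPolynomial.X j.1) = 0
            rw [hXj, if_neg hjne, smul_zero]
          · intro hh; exact absurd (Finset.mem_univ j0) hh
        have hC : ∑ j : Bt n i,
            MvPolynomial.coeff d (g (Sum.inr (Sum.inr j)) • F i ℓ m (Sum.inr (Sum.inr j)))
            = g (Sum.inr (Sum.inr j0)) * MvPolynomial.coeff ν (lin ℓ * lin m) := by
          rw [Finset.sum_eq_single j0]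
          · rw [MvPolynomial.coeff_smul]
            show g _ • MvPolynomial.coeff d (lin ℓ * lin m * MvPolynomial.X j0.1) = _
            rw [hXj, if_pos rfl, smul_eq_mul]
          · intro j _ hjne
            rw [MvPolynomial.coeff_smul]
            show g _ • MvPolynomial.coeff d (lin ℓ * lin m * MvPolynomial.X j.1) = 0
            rw [hXj, if_neg hjne, smul_zero]
          · intro hh; exact absurd (Finset.mem_univ j0) hh
        rw [Finset.sum_eq_zero (fun s _ => hA s), hB, hC, zero_add] at hd
        exact hd
      · push_neg at hν
        obtain ⟨j', hj', hνj⟩ := hν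
        rw [coeff_lin_mul_lin (hℓ _ hj'.1 hj'.2) (hℓ _ hj'.1 hj'.2) hνj,
          coeff_lin_mul_lin (hℓ _ hj'.1 hj'.2) (hm _ hj'.1 hj'.2) hνj]
        ring
    have hfac : lin ℓ * (MvPolynomial.C (g (Sum.inr (Sum.inl j0))) * lin ℓ
        + MvPolynomial.C (g (Sum.inr (Sum.inr j0))) * lin m) = 0 := by
      rw [← hq]; ring
    rcases mul_eq_zero.mp hfac with h1 | h2
    · exact absurd h1 hℓne
    · rw [lin_comb] at h2
      have hv := lin_eq_zero h2
      exact LinearIndependent.pair_iff.mp h _ _ hv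
  have hbadzero : ∀ x : Bt n i ⊕ Bt n i, g (Sum.inr x) = 0 := by
    rintro (j | j)
    · exact (key j).1
    · exact (key j).2
  have hmono : LinearIndependent ℂ (fun s : Sym (Gt n i) 3 => mono (n := n) (i := i) s) := by
    have hc := (MvPolynomial.basisMonomials (Fin (n+1)) ℂ).linearIndependent.comp
      expOf (expOf_injective (i := i))
    exact hc
  rw [Fintype.sum_sum_type] at hsum
  have hzero2 : ∑ x : Bt n i ⊕ Bt n i, g (Sum.inr x) • F i ℓ m (Sum.inr x) = 0 :=
    Finset.sum_eq_zero fun x _ => by rw [hbadzero x, zero_smul]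
  rw [hzero2, add_zero] at hsum
  rw [Fintype.linearIndependent_iff] at hmono
  rintro (s | x)
  · exact hmono (fun s => g (Sum.inl s)) hsum s
  · exact hbadzero x




lemma card_Bt (hn : 71 ≤ n) (i : Fin 3) : Fintype.card (Bt n i) = 24 := by
  have hi : (i : ℕ) < 3 := i.isLt
  have hf : Function.Bijective (fun t : Fin 24 =>
      (⟨⟨24 * (i : ℕ) + t.1, by have := t.2; omega⟩,
        ⟨by show 24 * (i:ℕ) ≤ 24 * (i:ℕ) + t.1; omega,
         by show 24 * (i:ℕ) + t.1 < 24 * (i:ℕ) + 24; have := t.2; omega⟩⟩ : Bt n i)) := by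
    constructor
    · intro t t' htt
      have := congrArg (fun x : Bt n i => (x.1 : ℕ)) htt
      simp only at this
      exact Fin.ext (by omega)
    · rintro ⟨⟨j, hj⟩, h1, h2⟩
      simp only at h1 h2
      refine ⟨⟨j - 24 * (i : ℕ), by omega⟩, ?_⟩
      apply Subtype.ext
      apply Fin.ext
      simp
      omega
  rw [← Fintype.card_of_bijective hf, Fintype.card_fin]

lemma card_Gt (hn : 71 ≤ n) (i : Fin 3) : Fintype.card (Gt n i) = n - 23 := by
  have : Fintype.card (Gt n i) = Fintype.card (Fin (n+1)) - Fintype.card (Bt n i) :=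
    Fintype.card_subtype_compl _
  rw [this, Fintype.card_fin, card_Bt hn i]
  omega




end Eq13

/-- Equation (13): for `n ≥ 71`, `i ∈ {1,2,3}` and linearly independent `ℓ, m ∈ U_i`,
`dim (S_3(U_i) + ℓ²·U + ℓ·m·U) = C(n−21,3) + 48 = N(n−24) + 48`. -/
theorem dim_S3U_sup_tanCone (n : ℕ) (hn : 71 ≤ n) (i : Fin 3) (ℓ m : Fin (n + 1) → ℂ)
    (hℓ : memU i ℓ) (hm : memU i m) (h : LinearIndependent ℂ ![ℓ, m]) :
    Module.finrank ℂ ↥(S3U (n := n) i ⊔ tanCone 3 ℓ m) = (n - 21).choose 3 + 48 := by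
  rw [← Eq13.span_F_eq hℓ hm, finrank_span_eq_card (Eq13.linearIndependent_F hℓ hm h)]
  rw [Fintype.card_sum, Fintype.card_sum, Eq13.card_Bt hn i,
    Sym.card_sym_eq_choose, Eq13.card_Gt hn i]
  have h23 : n - 23 + 3 - 1 = n - 21 := by omega
  rw [h23]
end
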